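/- If φ : ℝ^n → ℤ is a sum of signs, then the function x ↦ (φ(x)^4 − φ(x)^2)/2 takes integer values and is itself a sum of signs. -/

import Mathlib

/-- The integer-valued sign of a real number. -/
noncomputable def sgn (r : ℝ) : ℤ := if r < 0 then -1 else if 0 < r then 1 else 0

/-- A function `φ : ℝ^n → ℤ` is a sum of signs if it is a finite sum of signs of
polynomials. -/
def IsSumOfSigns {n : ℕ} (φ : (Fin n → ℝ) → ℤ) : Prop :=
  ∃ (s : ℕ) (g : Fin s → MvPolynomial (Fin n) ℝ),
    ∀ x, φ x = ∑ i : Fin s, sgn (MvPolynomial.eval x (g i))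

open Finset

lemma sgn_mul (a b : ℝ) : sgn (a * b) = sgn a * sgn b := by
  unfold sgn
  rcases lt_trichotomy a 0 with ha | ha | ha <;> rcases lt_trichotomy b 0 with hb | hb | hb <;>
    simp [ha, hb, ha.not_gt, hb.not_gt, mul_pos, mul_pos_of_neg_of_neg,
      mul_neg_of_pos_of_neg, mul_neg_of_neg_of_pos, lt_asymm, not_lt_of_gt]

lemma sgn_neg (a : ℝ) : sgn (-a) = - sgn a := by
  unfold sgn
  rcases lt_trichotomy a 0 with ha | ha | ha <;>
    simp [ha, ha.not_gt, neg_pos, neg_neg, lt_asymm]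

lemma sgn_trich (r : ℝ) : sgn r = -1 ∨ sgn r = 0 ∨ sgn r = 1 := by
  unfold sgn; split_ifs <;> simp

lemma sum_prod_split {ι : Type*} [Fintype ι] [LinearOrder ι] (F : ι × ι → ℤ)
    (hsym : ∀ i j, F (i, j) = F (j, i)) :
    ∑ p : ι × ι, F p
      = 2 * ∑ p ∈ univ.filter (fun p : ι × ι => p.1 < p.2), F p + ∑ i, F (i, i) := by
  classical
  have h1 : ∑ p : ι × ι, F p
      = ∑ p ∈ univ.filter (fun p : ι × ι => p.1 < p.2), F p
        + ∑ p ∈ univ.filter (fun p : ι × ι => ¬ p.1 < p.2), F p :=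
    (sum_filter_add_sum_filter_not _ _ _).symm
  have h2 : ∑ p ∈ univ.filter (fun p : ι × ι => ¬ p.1 < p.2), F p
      = ∑ p ∈ (univ.filter (fun p : ι × ι => ¬ p.1 < p.2)).filter (fun p => p.2 < p.1), F p
        + ∑ p ∈ (univ.filter (fun p : ι × ι => ¬ p.1 < p.2)).filter (fun p => ¬ p.2 < p.1), F p :=
    (sum_filter_add_sum_filter_not _ _ _).symm
  have e1 : (univ.filter (fun p : ι × ι => ¬ p.1 < p.2)).filter (fun p => p.2 < p.1)
      = univ.filter (fun p : ι × ι => p.2 < p.1) := by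
    rw [filter_filter]
    apply filter_congr
    intro p _
    simp only [and_iff_right_iff_imp]
    intro h
    exact not_lt_of_gt h
  have e2 : (univ.filter (fun p : ι × ι => ¬ p.1 < p.2)).filter (fun p => ¬ p.2 < p.1)
      = univ.filter (fun p : ι × ι => p.1 = p.2) := by
    rw [filter_filter]
    apply filter_congr
    intro p _
    constructor
    · rintro ⟨ha, hb⟩; exact le_antisymm (not_lt.1 hb) (not_lt.1 ha)
    · rintro h; simp [h]
  have e3 : ∑ p ∈ univ.filter (fun p : ι × ι => p.2 < p.1), F p
      = ∑ p ∈ univ.filter (fun p : ι × ι => p.1 < p.2), F p := by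
    apply Finset.sum_nbij' (fun p => Prod.swap p) (fun p => Prod.swap p) <;>
      simp +contextual [hsym _ _]
  have e4 : ∑ p ∈ univ.filter (fun p : ι × ι => p.1 = p.2), F p = ∑ i, F (i, i) := by
    apply Finset.sum_nbij' (fun p => p.1) (fun i => (i, i)) <;>
      simp +contextual [Prod.ext_iff]
  rw [h1, h2, e1, e2, e3, e4]; ring

lemma sq_sum_split {ι : Type*} [Fintype ι] [LinearOrder ι] (f : ι → ℤ) :
    (∑ i, f i) ^ 2
      = 2 * ∑ p ∈ univ.filter (fun p : ι × ι => p.1 < p.2), f p.1 * f p.2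
        + ∑ i, f i * f i := by
  have := sum_prod_split (fun p => f p.1 * f p.2) (fun i j => mul_comm _ _)
  rw [sq, Finset.sum_mul_sum]
  simpa [Fintype.sum_prod_type] using this

lemma isSumOfSigns_of_fintype {n : ℕ} (φ : (Fin n → ℝ) → ℤ) (ι : Type) [Fintype ι]
    (g : ι → MvPolynomial (Fin n) ℝ)
    (h : ∀ x, φ x = ∑ i, sgn (MvPolynomial.eval x (g i))) : IsSumOfSigns φ := by
  classical
  let e := (Fintype.equivFin ι).symm
  refine ⟨Fintype.card ι, g ∘ e, fun x => ?_⟩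
  rw [h]
  exact Fintype.sum_equiv e.symm _ _ (fun i => by simp)

theorem half_pow4_sub_pow2_isSumOfSigns {n : ℕ} (φ : (Fin n → ℝ) → ℤ)
    (hφ : IsSumOfSigns φ) :
    ∃ ψ : (Fin n → ℝ) → ℤ, IsSumOfSigns ψ ∧ ∀ x, 2 * ψ x = (φ x) ^ 4 - (φ x) ^ 2 := by
  classical
  obtain ⟨s, g, hg⟩ := hφ
  set e : Fin (s * s) ≃ Fin s × Fin s := finProdFinEquiv.symm with he
  set G : Fin (s * s) → MvPolynomial (Fin n) ℝ := fun t => g (e t).1 * g (e t).2 with hG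
  set A : Finset (Fin (s * s) × Fin (s * s)) :=
    univ.filter (fun p => p.1 < p.2) with hA
  set B : Finset (Fin s × Fin s) := univ.filter (fun p => p.1 < p.2) with hB
  refine ⟨fun x =>
    (∑ p ∈ A, sgn (MvPolynomial.eval x (G p.1 * G p.2)))
      + (∑ p ∈ B, sgn (MvPolynomial.eval x ((g p.1 * g p.2) * (g p.1 * g p.2))))
      + (∑ p ∈ B, sgn (MvPolynomial.eval x (-(g p.1 * g p.2)))), ?_, ?_⟩
  · refine isSumOfSigns_of_fintype _ (↥A ⊕ ↥B ⊕ ↥B)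
      (Sum.elim (fun p => G p.1.1 * G p.1.2)
        (Sum.elim (fun p => (g p.1.1 * g p.1.2) * (g p.1.1 * g p.1.2))
          (fun p => -(g p.1.1 * g p.1.2)))) (fun x => ?_)
    simp only [Fintype.sum_sum_type, Sum.elim_inl, Sum.elim_inr, add_assoc]
    rw [Finset.sum_coe_sort A (fun p => sgn (MvPolynomial.eval x (G p.1 * G p.2))),
      Finset.sum_coe_sort B (fun p => sgn (MvPolynomial.eval x ((g p.1 * g p.2) * (g p.1 * g p.2)))),
      Finset.sum_coe_sort B (fun p => sgn (MvPolynomial.eval x (-(g p.1 * g p.2))))]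
  · intro x
    dsimp only
    set c : Fin s → ℤ := fun i => sgn (MvPolynomial.eval x (g i)) with hc
    set d : Fin s × Fin s → ℤ := fun p => c p.1 * c p.2 with hd
    set ε : Fin (s * s) → ℤ := fun t => sgn (MvPolynomial.eval x (G t)) with hε
    have hεd : ∀ t, ε t = d (e t) := by
      intro t
      simp only [hε, hG, hd, hc, map_mul, sgn_mul]
    have hφ2 : φ x ^ 2 = ∑ t, ε t := by
      have h1 : ∑ t, ε t = ∑ p : Fin s × Fin s, d p :=
        Fintype.sum_equiv e _ _ (fun t => hεd t)
      rw [hg, h1, sq, Finset.sum_mul_sum, Fintype.sum_prod_type]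
    -- square of the sum of ε
    have hsq : (∑ t, ε t) ^ 2
        = 2 * ∑ p ∈ A, ε p.1 * ε p.2 + ∑ t, ε t * ε t := sq_sum_split ε
    -- the diagonal-corrected part
    have hdiag : ∑ t, (ε t * ε t - ε t) = 2 * ∑ p ∈ B, (d p * d p - d p) := by
      have h1 : ∑ t, (ε t * ε t - ε t) = ∑ p : Fin s × Fin s, (d p * d p - d p) :=
        Fintype.sum_equiv e _ _ (fun t => by rw [hεd t])
      have h2 := sum_prod_split (fun p : Fin s × Fin s => d p * d p - d p)
        (fun i j => by simp [hd, mul_comm])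
      have h3 : ∀ i : Fin s, d (i, i) * d (i, i) - d (i, i) = 0 := by
        intro i
        have : d (i, i) = c i * c i := rfl
        rcases sgn_trich (MvPolynomial.eval x (g i)) with h | h | h <;>
          rw [this] <;> rw [show c i = _ from h] <;> ring
      rw [h1, h2, Finset.sum_congr rfl (fun i _ => h3 i), Finset.sum_const_zero, add_zero, hB]
    -- rewrite the three sums defining ψ
    have t1 : ∀ p : Fin (s * s) × Fin (s * s),
        sgn (MvPolynomial.eval x (G p.1 * G p.2)) = ε p.1 * ε p.2 := by
      intro p; simp only [map_mul, sgn_mul, hε]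
    have t2 : ∀ p : Fin s × Fin s,
        sgn (MvPolynomial.eval x ((g p.1 * g p.2) * (g p.1 * g p.2))) = d p * d p := by
      intro p; simp only [map_mul, sgn_mul, hd, hc]
    have t3 : ∀ p : Fin s × Fin s,
        sgn (MvPolynomial.eval x (-(g p.1 * g p.2))) = - d p := by
      intro p; simp only [map_neg, map_mul, sgn_neg, sgn_mul, hd, hc]
    rw [Finset.sum_congr rfl (fun p _ => t1 p), Finset.sum_congr rfl (fun p _ => t2 p),
      Finset.sum_congr rfl (fun p _ => t3 p)]
    have hfinal : φ x ^ 4 - φ x ^ 2 = (∑ t, ε t) ^ 2 - ∑ t, ε t := by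
      rw [← hφ2]; ring
    rw [hfinal, hsq]
    have : ∑ t, (ε t * ε t - ε t) = ∑ t, ε t * ε t - ∑ t, ε t := Finset.sum_sub_distrib _ _
    rw [this] at hdiag
    have hBsub : ∑ p ∈ B, (d p * d p - d p)
        = ∑ p ∈ B, d p * d p - ∑ p ∈ B, d p := Finset.sum_sub_distrib _ _
    rw [hBsub] at hdiag
    rw [Finset.sum_neg_distrib]
    linarith [hdiag]
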